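/- Let α > -1 and let η be a real polynomial with η(x) ≠ 0 for all x ≥ 0. Then the set {η·p : p a polynomial} is dense in the Hilbert space L²((0,∞); x^α e^{-x} dx). -/

import Mathlib

open MeasureTheory Set Polynomial Filter
open scoped ENNReal NNReal

/-- The Laguerre-type measure `x^α e^{-x} dx` on `(0,∞)`. -/
noncomputable def laguerreMeasure (α : ℝ) : Measure ℝ :=
  (volume.restrict (Set.Ioi (0 : ℝ))).withDensity
    (fun x => ENNReal.ofReal (x ^ α * Real.exp (-x)))

namespace LagAux

variable {α : ℝ}



lemma int_rpow_exp {s b : ℝ} (hs : -1 < s) (hb : 0 < b) :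
    IntegrableOn (fun x : ℝ => x ^ s * Real.exp (-(b * x))) (Set.Ioi 0) := by
  have h := integrableOn_rpow_mul_exp_neg_mul_rpow hs zero_lt_one hb
  refine h.congr_fun (fun x hx => ?_) measurableSet_Ioi
  simp only [Real.rpow_one, neg_mul]

lemma int_poly_rpow_exp (q : Polynomial ℝ) {s b : ℝ} (hs : -1 < s) (hb : 0 < b) :
    IntegrableOn (fun x : ℝ => q.eval x * (x ^ s * Real.exp (-(b * x)))) (Set.Ioi 0) := by
  induction q using Polynomial.induction_on' with
  | add p q hp hq =>
      refine (hp.add hq).congr_fun (fun x _ => ?_) measurableSet_Ioi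
      simp [eval_add, add_mul]
  | monomial n a =>
      have h : IntegrableOn (fun x : ℝ => a • (x ^ (s + n) * Real.exp (-(b * x)))) (Set.Ioi 0) :=
        (int_rpow_exp (by linarith [Nat.cast_nonneg (α := ℝ) n]) hb).smul a
      refine IntegrableOn.congr_fun h (fun x hx => ?_) measurableSet_Ioi
      have hx0 : (0:ℝ) < x := hx
      rw [Real.rpow_add hx0, Real.rpow_natCast]
      simp [eval_monomial]
      ring





lemma lag_eq (α : ℝ) : laguerreMeasure α =
    (volume.restrict (Set.Ioi (0:ℝ))).withDensity
      (fun x => ((x ^ α * Real.exp (-x)).toNNReal : ℝ≥0∞)) := rfl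

lemma w_meas (α : ℝ) : Measurable (fun x : ℝ => (x ^ α * Real.exp (-x)).toNNReal) := by
  fun_prop

lemma integral_lag (α : ℝ) (f : ℝ → ℝ) :
    ∫ x, f x ∂(laguerreMeasure α)
      = ∫ x in Set.Ioi (0:ℝ), f x * (x ^ α * Real.exp (-x)) := by
  rw [lag_eq, integral_withDensity_eq_integral_smul (w_meas α) f]
  refine setIntegral_congr_fun measurableSet_Ioi (fun x hx => ?_)
  have hx0 : (0:ℝ) < x := hx
  have hw : 0 ≤ x ^ α * Real.exp (-x) :=
    mul_nonneg (Real.rpow_nonneg hx0.le α) (Real.exp_pos _).le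
  simp [NNReal.smul_def, Real.coe_toNNReal _ hw, mul_comm]

lemma integrable_lag_iff {f : ℝ → ℝ} :
    Integrable f (laguerreMeasure α) ↔
      IntegrableOn (fun x => f x * (x ^ α * Real.exp (-x))) (Set.Ioi 0) := by
  rw [lag_eq, integrable_withDensity_iff_integrable_smul (w_meas α)]
  constructor <;> intro h <;>
    refine IntegrableOn.congr_fun h (fun x hx => ?_) measurableSet_Ioi <;>
    · have hx0 : (0:ℝ) < x := hx
      have hw : 0 ≤ x ^ α * Real.exp (-x) :=
        mul_nonneg (Real.rpow_nonneg hx0.le α) (Real.exp_pos _).le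
      simp [NNReal.smul_def, Real.coe_toNNReal _ hw, mul_comm]




lemma memLp_poly_exp (hα : -1 < α) (q : Polynomial ℝ) {c : ℝ} (hc : c < 1/2) :
    MemLp (fun x => q.eval x * Real.exp (c * x)) 2 (laguerreMeasure α) := by
  have hcont : Continuous (fun x : ℝ => q.eval x * Real.exp (c * x)) := by fun_prop
  rw [memLp_two_iff_integrable_sq hcont.aestronglyMeasurable, integrable_lag_iff]
  have h := int_poly_rpow_exp (q * q) (b := 1 - 2*c) hα (by linarith)
  refine IntegrableOn.congr_fun h (fun x hx => ?_) measurableSet_Ioi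
  have he : Real.exp (c*x) * Real.exp (c*x) * Real.exp (-x) = Real.exp (-((1-2*c)*x)) := by
    rw [← Real.exp_add, ← Real.exp_add]; ring_nf
  rw [eval_mul]
  calc eval x q * eval x q * (x ^ α * Real.exp (-((1-2*c)*x)))
      = eval x q * eval x q * (x ^ α * (Real.exp (c*x) * Real.exp (c*x) * Real.exp (-x))) := by
        rw [he]
    _ = (eval x q * Real.exp (c * x)) ^ 2 * (x ^ α * Real.exp (-x)) := by ring

lemma pairing (g : Lp ℝ 2 (laguerreMeasure α)) {f : ℝ → ℝ}
    (hf : MemLp f 2 (laguerreMeasure α)) :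
    Integrable (fun x => f x * (g : ℝ → ℝ) x) (laguerreMeasure α) := by
  have h := L2.integrable_inner (𝕜 := ℝ) (hf.toLp f) g
  refine h.congr ?_
  filter_upwards [hf.coeFn_toLp] with x hx
  rw [RCLike.inner_apply]
  simp [hx, mul_comm]

lemma inner_eq (g : Lp ℝ 2 (laguerreMeasure α)) {f : ℝ → ℝ}
    (hf : MemLp f 2 (laguerreMeasure α)) :
    (inner ℝ (hf.toLp f) g : ℝ) = ∫ x, f x * (g : ℝ → ℝ) x ∂(laguerreMeasure α) := by
  rw [L2.inner_def]
  refine integral_congr_ae ?_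
  filter_upwards [hf.coeFn_toLp] with x hx
  rw [RCLike.inner_apply]
  simp [hx, mul_comm]




noncomputable def J (α : ℝ) (η : Polynomial ℝ) (g : Lp ℝ 2 (laguerreMeasure α))
    (n : ℕ) (t : ℝ) : ℝ :=
  ∫ x, (Polynomial.eval x (η * Polynomial.X ^ n) * Real.exp (-t * x)) * (g : ℝ → ℝ) x
    ∂(laguerreMeasure α)

lemma exp_tsum (y : ℝ) : ∑' k : ℕ, y ^ k / (Nat.factorial k : ℝ) = Real.exp y := by
  rw [Real.exp_eq_exp_ℝ, NormedSpace.exp_eq_tsum_div]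

lemma summable_expSeries (y : ℝ) : Summable (fun k : ℕ => y ^ k / (Nat.factorial k : ℝ)) := by
  have := Real.summable_pow_div_factorial y
  simpa using this

lemma J_integrable (hα : -1 < α) (η : Polynomial ℝ) (g : Lp ℝ 2 (laguerreMeasure α))
    (n : ℕ) {t : ℝ} (ht : -(1/2) < t) :
    Integrable (fun x => (Polynomial.eval x (η * Polynomial.X ^ n) * Real.exp (-t * x))
      * (g : ℝ → ℝ) x) (laguerreMeasure α) :=
  pairing g (memLp_poly_exp hα (η * Polynomial.X ^ n) (c := -t) (by linarith))

lemma J_step (hα : -1 < α) (η : Polynomial ℝ) (g : Lp ℝ 2 (laguerreMeasure α))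
    {t : ℝ} (ht : 0 ≤ t) (hJ : ∀ n : ℕ, J α η g n t = 0)
    {s : ℝ} (hs : 0 ≤ s) (hs' : s ≤ 1/4) : ∀ n : ℕ, J α η g n (t + s) = 0 := by
  intro n
  set G : ℝ → ℝ := (g : ℝ → ℝ) with hG
  set F : ℕ → ℝ → ℝ := fun k x => ((-s)^k / (Nat.factorial k : ℝ)) *
    ((Polynomial.eval x (η * Polynomial.X ^ (n + k)) * Real.exp (-t * x)) * G x) with hF
  set C : ℝ → ℝ := fun x =>
    (Polynomial.eval x (η * Polynomial.X ^ n) * Real.exp (-t * x)) * G x with hC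
  have hFk : ∀ k x, F k x = ((-(s*x))^k / (Nat.factorial k : ℝ)) * C x := by
    intro k x
    simp only [hF, hC, eval_mul, eval_pow, eval_X, pow_add]
    ring
  have hIk : ∀ k, Integrable (F k) (laguerreMeasure α) :=
    fun k => (J_integrable hα η g (n + k) (by linarith)).const_mul _
  -- the dominating function
  set D : ℝ → ℝ := fun x =>
    (Polynomial.eval x (η * Polynomial.X ^ n) * Real.exp ((s - t) * x)) * G x with hD
  have hDint : Integrable D (laguerreMeasure α) :=
    pairing g (memLp_poly_exp hα (η * Polynomial.X ^ n) (c := s - t) (by linarith))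
  -- a.e. positivity
  have hae : ∀ᵐ x ∂(laguerreMeasure α), 0 < x := by
    have h1 : laguerreMeasure α ≪ volume.restrict (Set.Ioi (0:ℝ)) := withDensity_absolutelyContinuous _ _
    exact h1.ae_le (ae_restrict_mem measurableSet_Ioi)
  -- norm computation
  have hnorm : ∀ᵐ x ∂(laguerreMeasure α), ∀ k, ‖F k x‖ = ((s*x)^k / (Nat.factorial k : ℝ)) * ‖C x‖ := by
    filter_upwards [hae] with x hx k
    rw [hFk]
    rw [norm_mul, norm_div, norm_pow, norm_neg,
      Real.norm_of_nonneg (mul_nonneg hs hx.le), Real.norm_of_nonneg (Nat.cast_nonneg _)]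
  have hsumnorm : ∀ᵐ x ∂(laguerreMeasure α), ∑' k, (‖F k x‖₊ : ℝ≥0∞) = (‖D x‖₊ : ℝ≥0∞) := by
    filter_upwards [hnorm, hae] with x hx hx0
    have hsummable : Summable (fun k => ‖F k x‖) := by
      simp only [hx]
      exact (summable_expSeries (s*x)).mul_right _
    have h1 : ∑' k, (‖F k x‖₊ : ℝ≥0∞) = ENNReal.ofReal (∑' k, ‖F k x‖) := by
      rw [ENNReal.ofReal_tsum_of_nonneg (fun k => norm_nonneg _) hsummable]
      simp_rw [ofReal_norm, enorm_eq_nnnorm]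
    rw [h1]
    have h2 : ∑' k, ‖F k x‖ = Real.exp (s*x) * ‖C x‖ := by
      simp only [hx]
      rw [tsum_mul_right, exp_tsum]
    rw [h2]
    have h3 : Real.exp (s*x) * ‖C x‖ = ‖D x‖ := by
      simp only [hC, hD, norm_mul]
      rw [Real.norm_of_nonneg (Real.exp_pos _).le, Real.norm_of_nonneg (Real.exp_pos _).le]
      rw [show (s - t) * x = s*x + (-t*x) by ring, Real.exp_add]
      ring
    rw [h3, ofReal_norm, enorm_eq_nnnorm]
  -- summability of lintegrals
  have hcond : ∑' k, ∫⁻ x, (‖F k x‖₊ : ℝ≥0∞) ∂(laguerreMeasure α) ≠ ∞ := by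
    rw [← lintegral_tsum (f := fun k x => (‖F k x‖₊ : ℝ≥0∞)) (fun k => ((hIk k).aestronglyMeasurable.enorm :
      AEMeasurable (fun x => (‖F k x‖₊ : ℝ≥0∞)) (laguerreMeasure α)))]
    rw [lintegral_congr_ae hsumnorm]
    exact hDint.2.ne
  have key := integral_tsum (fun k => (hIk k).aestronglyMeasurable) hcond
  -- LHS is J n (t+s)
  have hlhs : ∫ x, ∑' k, F k x ∂(laguerreMeasure α) = J α η g n (t + s) := by
    refine integral_congr_ae (Filter.Eventually.of_forall (fun x => ?_))
    show ∑' k, F k x = (eval x (η * Polynomial.X ^ n) * Real.exp (-(t+s) * x)) * G x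
    have : ∑' k, F k x = Real.exp (-(s*x)) * C x := by
      simp only [hFk]
      rw [tsum_mul_right, exp_tsum]
    rw [this]
    simp only [hC]
    rw [show -(t+s) * x = -t*x + -(s*x) by ring, Real.exp_add]
    ring
  have hrhs : ∑' k, ∫ x, F k x ∂(laguerreMeasure α) = 0 := by
    have : ∀ k, ∫ x, F k x ∂(laguerreMeasure α) = ((-s)^k / (Nat.factorial k : ℝ)) * J α η g (n+k) t := by
      intro k
      simp only [hF]
      rw [integral_const_mul]
      rfl
    simp only [this, hJ, mul_zero]
    exact tsum_zero
  rw [← hlhs, key, hrhs]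

lemma J_nat_zero (hα : -1 < α) (η : Polynomial ℝ) (g : Lp ℝ 2 (laguerreMeasure α))
    (hJ0 : ∀ n : ℕ, J α η g n 0 = 0) : ∀ (m : ℕ) (n : ℕ), J α η g n m = 0 := by
  have hq : ∀ j : ℕ, ∀ n : ℕ, J α η g n (j * (1/4 : ℝ)) = 0 := by
    intro j
    induction j with
    | zero => simpa using hJ0
    | succ j ih =>
        intro n
        have h := J_step hα η g (t := j * (1/4:ℝ)) (by positivity) ih
          (s := (1/4:ℝ)) (by norm_num) (by norm_num) n
        convert h using 2
        push_cast; ring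
  intro m n
  have := hq (4 * m) n
  convert this using 2
  push_cast; ring




lemma hae (α : ℝ) : ∀ᵐ x ∂(laguerreMeasure α), 0 < x := by
  have h1 : laguerreMeasure α ≪ volume.restrict (Set.Ioi (0:ℝ)) :=
    withDensity_absolutelyContinuous _ _
  exact h1.ae_le (ae_restrict_mem measurableSet_Ioi)

lemma exp_neg_abs_mem (x : ℝ) : Real.exp (-|x|) ∈ Set.Icc (0:ℝ) 1 :=
  ⟨(Real.exp_pos _).le, Real.exp_le_one_iff.mpr (neg_nonpos.mpr (abs_nonneg _))⟩

lemma eta_g_integrable (hα : -1 < α) (η : Polynomial ℝ) (g : Lp ℝ 2 (laguerreMeasure α)) :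
    Integrable (fun x => Polynomial.eval x η * (g : ℝ → ℝ) x) (laguerreMeasure α) := by
  have h := pairing g (memLp_poly_exp hα η (c := 0) (by norm_num))
  refine h.congr (Eventually.of_forall (fun x => ?_))
  simp

/-- Integrability of `η·(ψ∘e)·G` for `ψ` continuous on `[0,1]`. -/
lemma eta_psi_integrable (hα : -1 < α) (η : Polynomial ℝ) (g : Lp ℝ 2 (laguerreMeasure α))
    {ψ : ℝ → ℝ} (hψ : ContinuousOn ψ (Set.Icc 0 1)) :
    Integrable (fun x => (Polynomial.eval x η * ψ (Real.exp (-|x|))) * (g : ℝ → ℝ) x)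
      (laguerreMeasure α) := by
  have he : Continuous (fun x : ℝ => Real.exp (-|x|)) := by fun_prop
  have hcont : Continuous (fun x : ℝ => ψ (Real.exp (-|x|))) :=
    hψ.comp_continuous he exp_neg_abs_mem
  obtain ⟨C, hC⟩ := (isCompact_Icc (a := (0:ℝ)) (b := 1)).exists_bound_of_continuousOn hψ
  have h := (eta_g_integrable hα η g).bdd_mul hcont.aestronglyMeasurable
    (Eventually.of_forall fun x => hC _ (exp_neg_abs_mem x))
  refine h.congr (Eventually.of_forall (fun x => ?_))
  ring

/-- Step (b): moments against polynomials in `e^{-x}` vanish. -/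
lemma poly_exp_test (hα : -1 < α) (η : Polynomial ℝ) (g : Lp ℝ 2 (laguerreMeasure α))
    (hJ0 : ∀ n : ℕ, J α η g n 0 = 0) (P : Polynomial ℝ) :
    ∫ x, (Polynomial.eval x η * P.eval (Real.exp (-|x|))) * (g : ℝ → ℝ) x
      ∂(laguerreMeasure α) = 0 := by
  have hJm := J_nat_zero hα η g hJ0
  induction P using Polynomial.induction_on' with
  | add p q hp hq =>
      have h1 := eta_psi_integrable hα η g (ψ := fun y => p.eval y) p.continuous.continuousOn
      have h2 := eta_psi_integrable hα η g (ψ := fun y => q.eval y) q.continuous.continuousOn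
      have : ∫ x, ((Polynomial.eval x η * p.eval (Real.exp (-|x|))) * (g : ℝ → ℝ) x
          + (Polynomial.eval x η * q.eval (Real.exp (-|x|))) * (g : ℝ → ℝ) x)
          ∂(laguerreMeasure α) = 0 := by
        rw [integral_add h1 h2, hp, hq, add_zero]
      rw [← this]
      refine integral_congr_ae (Eventually.of_forall (fun x => ?_))
      simp [eval_add]; ring
  | monomial m a =>
      have key : J α η g 0 (m : ℝ) = 0 := hJm m 0
      have h0 : ∫ x, a • ((Polynomial.eval x (η * Polynomial.X ^ 0)
          * Real.exp (-(m:ℝ) * x)) * (g : ℝ → ℝ) x) ∂(laguerreMeasure α) = 0 := by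
        rw [integral_smul]
        rw [show (∫ x, (Polynomial.eval x (η * Polynomial.X ^ 0)
          * Real.exp (-(m:ℝ) * x)) * (g : ℝ → ℝ) x ∂(laguerreMeasure α))
            = J α η g 0 (m:ℝ) from rfl, key, smul_zero]
      rw [← h0]
      refine integral_congr_ae ?_
      filter_upwards [hae α] with x hx
      rw [abs_of_pos hx]
      have hexp : (Real.exp (-x))^m = Real.exp (-(m:ℝ)*x) := by
        rw [← Real.exp_nat_mul]
        congr 1
        ring
      simp only [eval_monomial, pow_zero, mul_one, eval_mul, eval_pow, eval_X, hexp,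
        smul_eq_mul]
      ring


lemma cont_test (hα : -1 < α) (η : Polynomial ℝ) (g : Lp ℝ 2 (laguerreMeasure α))
    (hJ0 : ∀ n : ℕ, J α η g n 0 = 0) {ψ : ℝ → ℝ} (hψ : ContinuousOn ψ (Set.Icc 0 1)) :
    ∫ x, (Polynomial.eval x η * ψ (Real.exp (-|x|))) * (g : ℝ → ℝ) x
      ∂(laguerreMeasure α) = 0 := by
  set G : ℝ → ℝ := (g : ℝ → ℝ) with hG
  set I := ∫ x, (Polynomial.eval x η * ψ (Real.exp (-|x|))) * G x ∂(laguerreMeasure α) with hI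
  set K := ∫ x, ‖Polynomial.eval x η * G x‖ ∂(laguerreMeasure α) with hK
  have hK0 : 0 ≤ K := integral_nonneg (fun x => norm_nonneg _)
  have hbound : ∀ ε > 0, ‖I‖ ≤ ε * K := by
    intro ε hε
    obtain ⟨p, hp⟩ := exists_polynomial_near_of_continuousOn 0 1 ψ hψ ε hε
    have hzero := poly_exp_test hα η g hJ0 p
    have hint1 := eta_psi_integrable hα η g hψ
    have hint2 := eta_psi_integrable hα η g (ψ := fun y => p.eval y) p.continuous.continuousOn
    have hIdiff : I = ∫ x, ((Polynomial.eval x η * ψ (Real.exp (-|x|))) * G x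
        - (Polynomial.eval x η * p.eval (Real.exp (-|x|))) * G x) ∂(laguerreMeasure α) := by
      rw [integral_sub hint1 hint2, hzero, sub_zero]
    rw [hIdiff]
    have hb := norm_integral_le_of_norm_le
      (μ := laguerreMeasure α)
      (f := fun x => (Polynomial.eval x η * ψ (Real.exp (-|x|))) * G x
        - (Polynomial.eval x η * p.eval (Real.exp (-|x|))) * G x)
      ((eta_g_integrable hα η g).norm.const_mul ε)
      (Eventually.of_forall (fun x => ?_))
    · calc ‖∫ x, ((Polynomial.eval x η * ψ (Real.exp (-|x|))) * G x
            - (Polynomial.eval x η * p.eval (Real.exp (-|x|))) * G x) ∂(laguerreMeasure α)‖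
          ≤ ∫ x, ε * ‖Polynomial.eval x η * G x‖ ∂(laguerreMeasure α) := hb
        _ = ε * K := by rw [integral_const_mul]
    · have hmem := exp_neg_abs_mem x
      have hclose := hp _ hmem
      have : (Polynomial.eval x η * ψ (Real.exp (-|x|))) * G x
          - (Polynomial.eval x η * p.eval (Real.exp (-|x|))) * G x
          = (Polynomial.eval x η * G x) * (ψ (Real.exp (-|x|)) - p.eval (Real.exp (-|x|))) := by
        ring
      show ‖(Polynomial.eval x η * ψ (Real.exp (-|x|))) * G x
          - (Polynomial.eval x η * p.eval (Real.exp (-|x|))) * G x‖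
          ≤ ε * ‖Polynomial.eval x η * G x‖
      rw [this, norm_mul]
      rw [mul_comm (ε : ℝ) _]
      refine mul_le_mul_of_nonneg_left ?_ (norm_nonneg _)
      rw [Real.norm_eq_abs, abs_sub_comm]
      exact (hclose).le
  by_contra hI0
  have h1 : 0 < ‖I‖ := norm_pos_iff.mpr hI0
  have h2 := hbound (‖I‖ / (2*(K+1))) (by positivity)
  rw [div_mul_eq_mul_div, le_div_iff₀ (by positivity : (0:ℝ) < 2*(K+1))] at h2
  nlinarith [h1, hK0]

lemma weighted_zero (hα : -1 < α) (η : Polynomial ℝ) (g : Lp ℝ 2 (laguerreMeasure α))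
    (hJ0 : ∀ n : ℕ, J α η g n 0 = 0) :
    ∀ᵐ x ∂(volume.restrict (Set.Ioi (0:ℝ))),
      (Polynomial.eval x η * (g : ℝ → ℝ) x) * (x ^ α * Real.exp (-x)) = 0 := by
  refine ae_eq_zero_of_integral_contDiff_smul_eq_zero
    (integrable_lag_iff.mp (eta_g_integrable hα η g)).locallyIntegrable ?_
  intro φ hφ hsupp
  obtain ⟨M, hMsub⟩ := (hsupp.isBounded).subset_closedBall 0
  set N : ℝ := |M| + 1 with hNdef
  have hN : 0 < N := by positivity
  have hMzero : ∀ x : ℝ, N ≤ |x| → φ x = 0 := by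
    intro x hx
    refine image_eq_zero_of_notMem_tsupport (fun hmem => ?_)
    have := hMsub hmem
    rw [Metric.mem_closedBall, Real.dist_eq, sub_zero] at this
    have : M ≤ |M| := le_abs_self M
    linarith
  set ψ : ℝ → ℝ := fun y => if y ≤ 0 then 0 else φ (-Real.log y) with hψ
  have hψ0 : ∀ y : ℝ, |y| < Real.exp (-N) → ψ y = 0 := by
    intro y hy
    rcases le_or_gt y 0 with h | h
    · simp [hψ, h]
    · have hlog : Real.log y < -N := by
        rw [Real.log_lt_iff_lt_exp h]
        calc y ≤ |y| := le_abs_self y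
          _ < Real.exp (-N) := hy
      have : N ≤ |(-Real.log y)| := by
        rw [abs_neg, abs_of_neg (by linarith)]
        linarith
      simp [hψ, not_le.mpr h, hMzero _ this]
  have hψcont : ContinuousOn ψ (Set.Icc 0 1) := by
    intro y hy
    rcases eq_or_lt_of_le hy.1 with h0 | h0
    · refine ContinuousAt.continuousWithinAt ?_
      have hev : ∀ᶠ y' in nhds y, ψ y' = 0 := by
        rw [Metric.eventually_nhds_iff]
        refine ⟨Real.exp (-N), Real.exp_pos _, fun {y'} hy' => ?_⟩
        rw [Real.dist_eq, ← h0, sub_zero] at hy'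
        exact hψ0 _ hy'
      have hψy : ψ y = 0 := hψ0 _ (by rw [← h0]; simpa using Real.exp_pos (-N))
      refine ContinuousAt.congr (f := fun _ : ℝ => (0:ℝ)) continuousAt_const ?_
      filter_upwards [hev] with z hz
      exact hz.symm
    · refine ContinuousAt.continuousWithinAt ?_
      have hcg : ContinuousAt (fun y' => φ (-Real.log y')) y :=
        (hφ.continuous.continuousAt).comp ((Real.continuousAt_log (ne_of_gt h0)).neg)
      refine ContinuousAt.congr hcg ?_
      filter_upwards [lt_mem_nhds h0] with z hz
      simp [hψ, not_le.mpr hz]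
  have hψe : ∀ x : ℝ, 0 < x → ψ (Real.exp (-x)) = φ x := by
    intro x hx
    have : ¬ (Real.exp (-x) ≤ 0) := not_le.mpr (Real.exp_pos _)
    simp [hψ, this, Real.log_exp]
  have h0 := cont_test hα η g hJ0 hψcont
  rw [integral_lag] at h0
  calc ∫ x, φ x • ((Polynomial.eval x η * (g : ℝ → ℝ) x) * (x ^ α * Real.exp (-x)))
        ∂(volume.restrict (Set.Ioi (0:ℝ)))
      = ∫ x in Set.Ioi (0:ℝ),
          (Polynomial.eval x η * ψ (Real.exp (-|x|))) * (g : ℝ → ℝ) x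
            * (x ^ α * Real.exp (-x)) := by
        refine setIntegral_congr_fun measurableSet_Ioi (fun x hx => ?_)
        have hx0 : (0:ℝ) < x := hx
        rw [abs_of_pos hx0, hψe x hx0]
        simp only [smul_eq_mul]
        ring
    _ = 0 := h0

lemma g_zero (hα : -1 < α) (η : Polynomial ℝ) (hη : ∀ x : ℝ, 0 ≤ x → Polynomial.eval x η ≠ 0)
    (g : Lp ℝ 2 (laguerreMeasure α)) (hJ0 : ∀ n : ℕ, J α η g n 0 = 0) : g = 0 := by
  have h1 := weighted_zero hα η g hJ0
  have h2 : ∀ᵐ x ∂(volume.restrict (Set.Ioi (0:ℝ))), (g : ℝ → ℝ) x = 0 := by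
    filter_upwards [h1, ae_restrict_mem measurableSet_Ioi] with x hx hx0
    have hx0' : (0:ℝ) < x := hx0
    have hw : 0 < x ^ α * Real.exp (-x) :=
      mul_pos (Real.rpow_pos_of_pos hx0' _) (Real.exp_pos _)
    have hηx := hη x hx0'.le
    rcases mul_eq_zero.mp hx with h | h
    · rcases mul_eq_zero.mp h with h' | h'
      · exact absurd h' hηx
      · exact h'
    · exact absurd h hw.ne'
  have h3 : ∀ᵐ x ∂(laguerreMeasure α), (g : ℝ → ℝ) x = 0 :=
    (withDensity_absolutelyContinuous _ _).ae_le h2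
  refine Lp.ext (μ := laguerreMeasure α) ?_
  filter_upwards [h3, Lp.coeFn_zero (E := ℝ) (p := 2) (μ := laguerreMeasure α)] with x hx hx0
  rw [hx, hx0]
  rfl



lemma memLp_polyeval (hα : -1 < α) (q : Polynomial ℝ) :
    MemLp (fun x => q.eval x) 2 (laguerreMeasure α) := by
  simpa using memLp_poly_exp hα q (c := 0) (by norm_num)

end LagAux

open LagAux in
/-- for `α > -1` and a real polynomial `η` with no zeros on `[0,∞)`,
the set of polynomial multiples of `η` is dense in `L²((0,∞); x^α e^{-x} dx)`. -/
theorem eta_poly_dense (α : ℝ) (hα : -1 < α) (η : Polynomial ℝ)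
    (hη : ∀ x : ℝ, 0 ≤ x → Polynomial.eval x η ≠ 0) :
    Dense {f : Lp ℝ 2 (laguerreMeasure α) |
      ∃ p : Polynomial ℝ,
        ∀ᵐ x ∂(laguerreMeasure α), f x = Polynomial.eval x (η * p)} := by
  set S : Submodule ℝ (Lp ℝ 2 (laguerreMeasure α)) :=
    { carrier := {f : Lp ℝ 2 (laguerreMeasure α) |
        ∃ p : Polynomial ℝ,
          ∀ᵐ x ∂(laguerreMeasure α), f x = Polynomial.eval x (η * p)}
      add_mem' := by
        rintro f1 f2 ⟨p1, hp1⟩ ⟨p2, hp2⟩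
        refine ⟨p1 + p2, ?_⟩
        filter_upwards [hp1, hp2, Lp.coeFn_add f1 f2] with x h1 h2 h3
        rw [h3]
        simp only [Pi.add_apply, h1, h2, mul_add, eval_add]
      zero_mem' := by
        refine ⟨0, ?_⟩
        filter_upwards [Lp.coeFn_zero (E := ℝ) (p := 2) (μ := laguerreMeasure α)] with x h
        rw [h]
        simp
      smul_mem' := by
        rintro c f ⟨p, hp⟩
        refine ⟨Polynomial.C c * p, ?_⟩
        filter_upwards [hp, Lp.coeFn_smul c f] with x h1 h2
        rw [h2]
        simp only [Pi.smul_apply, h1, smul_eq_mul, eval_mul, eval_C]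
        ring } with hS
  show Dense (S : Set (Lp ℝ 2 (laguerreMeasure α)))
  rw [Submodule.dense_iff_topologicalClosure_eq_top, Submodule.topologicalClosure_eq_top_iff]
  rw [Submodule.eq_bot_iff]
  intro g hg
  rw [Submodule.mem_orthogonal] at hg
  refine g_zero hα η hη g (fun n => ?_)
  have hf : MemLp (fun x => Polynomial.eval x (η * Polynomial.X ^ n)) 2 (laguerreMeasure α) :=
    memLp_polyeval hα _
  have hmem : hf.toLp _ ∈ S := by
    refine ⟨Polynomial.X ^ n, ?_⟩
    filter_upwards [hf.coeFn_toLp] with x h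
    rw [h]
  have h0 := hg _ hmem
  rw [inner_eq g hf] at h0
  have hJ : J α η g n 0 = ∫ x, Polynomial.eval x (η * Polynomial.X ^ n)
      * (g : ℝ → ℝ) x ∂(laguerreMeasure α) := by
    refine integral_congr_ae (Eventually.of_forall (fun x => ?_))
    show (Polynomial.eval x (η * Polynomial.X ^ n) * Real.exp (-(0:ℝ) * x))
      * (g : ℝ → ℝ) x = _
    simp
  rw [hJ, h0]
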